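/- In a Keigher differential ring A, an element a belongs to every prime differential ideal of A if and only if a is nilpotent. -/
import Mathlib


/-- An ideal is a differential ideal w.r.t. a family of derivation maps `d`. -/
def IsDiffIdeal {A : Type*} [CommRing A] {k : ℕ} (d : Fin k → A → A) (I : Ideal A) : Prop :=
  ∀ i : Fin k, ∀ x ∈ I, d i x ∈ I

/-- The differential spectrum: prime differential ideals, with the Kolchin topology
(the subspace topology induced from the Zariski topology on `PrimeSpectrum`). -/
abbrev DiffSpec {A : Type*} [CommRing A] {k : ℕ} (d : Fin k → A → A) :=
  {p : PrimeSpectrum A // IsDiffIdeal d p.asIdeal}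

/-- A Keigher ring: the radical of every differential ideal is differential. -/
def IsKeigher {A : Type*} [CommRing A] {k : ℕ} (d : Fin k → A → A) : Prop :=
  ∀ I : Ideal A, IsDiffIdeal d I → IsDiffIdeal d I.radical

/-- `radDiffGen d E` is the smallest radical differential ideal containing `E`. -/
def radDiffGen {A : Type*} [CommRing A] {k : ℕ} (d : Fin k → A → A) (E : Set A) : Ideal A :=
  sInf {I : Ideal A | E ⊆ I ∧ I.IsRadical ∧ IsDiffIdeal d I}

section Aux
variable {A : Type*} [CommRing A] {k : ℕ} (d : Fin k → A → A)

lemma subset_radDiffGen (E : Set A) : E ⊆ ↑(radDiffGen d E) := by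
  intro x hx
  rw [SetLike.mem_coe, radDiffGen, Ideal.mem_sInf]
  exact fun I hI => hI.1 hx

lemma radDiffGen_le {E : Set A} {I : Ideal A} (h1 : E ⊆ ↑I) (h2 : I.IsRadical)
    (h3 : IsDiffIdeal d I) : radDiffGen d E ≤ I :=
  sInf_le ⟨h1, h2, h3⟩

lemma radDiffGen_isRadical (E : Set A) : (radDiffGen d E).IsRadical := by
  intro x hx
  rw [radDiffGen, Ideal.mem_sInf]
  intro I hI
  exact hI.2.1 (Ideal.radical_mono (sInf_le hI) hx)

lemma radDiffGen_isDiff (E : Set A) : IsDiffIdeal d (radDiffGen d E) := by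
  intro i x hx
  rw [radDiffGen, Ideal.mem_sInf] at hx ⊢
  intro I hI
  exact hI.2.2 i x (hx hI)

variable (δ : Fin k → Derivation ℤ A A)

/-- The colon ideal {x | x * b ∈ I}. -/
def colonI (I : Ideal A) (b : A) : Ideal A where
  carrier := {x | x * b ∈ I}
  add_mem' := by intro x y hx hy; simpa [add_mul] using I.add_mem hx hy
  zero_mem' := by simp
  smul_mem' := by intro c x hx; simpa [smul_eq_mul, mul_assoc] using I.mul_mem_left c hx

lemma mem_colonI {I : Ideal A} {b x : A} : x ∈ colonI I b ↔ x * b ∈ I := Iff.rfl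

lemma colonI_isRadical {I : Ideal A} (hr : I.IsRadical) (b : A) : (colonI I b).IsRadical := by
  intro x hx
  obtain ⟨n, hn⟩ := hx
  rw [mem_colonI] at hn ⊢
  rcases n with _ | m
  · simpa using I.mul_mem_left x (by simpa using hn)
  · apply hr
    refine ⟨m + 1, ?_⟩
    have h : (x * b) ^ (m + 1) = (x ^ (m + 1) * b) * b ^ m := by ring
    rw [h]
    exact I.mul_mem_right _ hn

lemma colonI_isDiff {I : Ideal A} (hr : I.IsRadical) (hd : IsDiffIdeal (fun i => ⇑(δ i)) I)
    (b : A) : IsDiffIdeal (fun i => ⇑(δ i)) (colonI I b) := by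
  intro i x hx
  rw [mem_colonI] at hx ⊢
  set u := δ i x
  set v := δ i b
  have h1 : x * v + b * u ∈ I := by
    have := hd i _ hx
    simpa [Derivation.leibniz, smul_eq_mul, u, v] using this
  have h2 : (u * b) * (x * v) ∈ I := by
    have h : (u * b) * (x * v) = (u * v) * (x * b) := by ring
    rw [h]; exact I.mul_mem_left _ hx
  have h3 : (u * b) ^ 2 ∈ I := by
    have h : (u * b) ^ 2 = (u * b) * (x * v + b * u) - (u * b) * (x * v) := by ring
    rw [h]
    exact I.sub_mem (I.mul_mem_left _ h1) h2
  exact hr ⟨2, h3⟩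

lemma mul_mem_radDiffGen {E : Set A} {z : A} (b : A)
    (hz : z ∈ radDiffGen (fun i => ⇑(δ i)) E) :
    b * z ∈ radDiffGen (fun i => ⇑(δ i)) ((b * ·) '' E) := by
  set I := radDiffGen (fun i => ⇑(δ i)) ((b * ·) '' E) with hI
  have hle : radDiffGen (fun i => ⇑(δ i)) E ≤ colonI I b := by
    apply radDiffGen_le
    · intro e he
      rw [SetLike.mem_coe, mem_colonI, mul_comm]
      exact subset_radDiffGen _ _ ⟨e, he, rfl⟩
    · exact colonI_isRadical (radDiffGen_isRadical _ _) b
    · exact colonI_isDiff δ (radDiffGen_isRadical _ _) (radDiffGen_isDiff _ _) b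
  have h := hle hz
  rw [mem_colonI, mul_comm] at h
  exact h

end Aux

/-- In a Keigher differential ring, an element lies in every prime differential ideal
iff it is nilpotent. -/
theorem stmt2 {A : Type*} [CommRing A] {k : ℕ} (δ : Fin k → Derivation ℤ A A)
    (hcomm : ∀ i j a, δ i (δ j a) = δ j (δ i a))
    (hK : IsKeigher (fun i => ⇑(δ i)))
    (a : A) :
    (∀ p : DiffSpec (fun i => ⇑(δ i)), a ∈ p.1.asIdeal) ↔ IsNilpotent a := by
  constructor
  · intro h
    by_contra hna
    set S : Set (Ideal A) := {I | I.IsRadical ∧ IsDiffIdeal (fun i => ⇑(δ i)) I ∧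
      ∀ n : ℕ, a ^ n ∉ I} with hS
    have hnil : nilradical A ∈ S := by
      refine ⟨Ideal.radical_isRadical ⊥, hK ⊥ ?_, ?_⟩
      · intro i x hx
        rw [Ideal.mem_bot] at hx ⊢
        simp [hx]
      · intro n hn
        rw [mem_nilradical] at hn
        obtain ⟨m, hm⟩ := hn
        exact hna ⟨n * m, by rw [pow_mul]; exact hm⟩
    have hchainub : ∀ c ⊆ S, IsChain (· ≤ ·) c → ∀ y ∈ c,
        ∃ ub ∈ S, ∀ z ∈ c, z ≤ ub := by
      intro c hcS hchain y hyc
      refine ⟨sSup c, ⟨?_, ?_, ?_⟩, fun z hz => le_sSup hz⟩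
      · intro x hx
        obtain ⟨n, hn⟩ := hx
        obtain ⟨I, hIc, hnI⟩ := (Submodule.mem_sSup_of_directed ⟨y, hyc⟩ hchain.directedOn).1 hn
        exact le_sSup hIc ((hcS hIc).1 ⟨n, hnI⟩)
      · intro i x hx
        obtain ⟨I, hIc, hxI⟩ := (Submodule.mem_sSup_of_directed ⟨y, hyc⟩ hchain.directedOn).1 hx
        exact le_sSup hIc ((hcS hIc).2.1 i x hxI)
      · intro n hn
        obtain ⟨I, hIc, hnI⟩ := (Submodule.mem_sSup_of_directed ⟨y, hyc⟩ hchain.directedOn).1 hn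
        exact (hcS hIc).2.2 n hnI
    obtain ⟨P, -, hPmax⟩ := zorn_le_nonempty₀ S hchainub (nilradical A) hnil
    obtain ⟨hPrad, hPdiff, hPavoid⟩ := hPmax.1
    have hprime : P.IsPrime := by
      constructor
      · intro htop
        exact hPavoid 0 (htop ▸ Submodule.mem_top)
      · intro x y hxy
        by_contra hcon
        push_neg at hcon
        obtain ⟨hx, hy⟩ := hcon
        have key : ∀ w : A, w ∉ P →
            ∃ m : ℕ, a ^ m ∈ radDiffGen (fun i => ⇑(δ i)) (↑P ∪ {w}) := by
          intro w hw
          by_contra hno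
          push_neg at hno
          have hmem : radDiffGen (fun i => ⇑(δ i)) (↑P ∪ {w}) ∈ S :=
            ⟨radDiffGen_isRadical _ _, radDiffGen_isDiff _ _, hno⟩
          have hle : P ≤ radDiffGen (fun i => ⇑(δ i)) (↑P ∪ {w}) :=
            fun z hz => subset_radDiffGen _ _ (Or.inl hz)
          exact hw (hPmax.2 hmem hle (subset_radDiffGen _ _ (Or.inr rfl)))
        obtain ⟨m, hm⟩ := key x hx
        obtain ⟨n, hn⟩ := key y hy
        have step1 : a ^ m * a ^ n ∈
            radDiffGen (fun i => ⇑(δ i)) ((a ^ m * ·) '' (↑P ∪ {y})) :=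
          mul_mem_radDiffGen δ _ hn
        have himg : ∀ e ∈ (↑P ∪ {y} : Set A), a ^ m * e ∈ P := by
          intro e he
          have h1 : e * a ^ m ∈ radDiffGen (fun i => ⇑(δ i)) ((e * ·) '' (↑P ∪ {x})) :=
            mul_mem_radDiffGen δ _ hm
          have h2 : ((e * ·) '' (↑P ∪ {x}) : Set A) ⊆ ↑P := by
            rintro _ ⟨f, hf, rfl⟩
            rcases he with he | he
            · exact P.mul_mem_right f he
            · rcases hf with hf | hf
              · rw [Set.mem_singleton_iff] at he; subst he
                exact P.mul_mem_left _ hf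
              · rw [Set.mem_singleton_iff] at he hf; subst he; subst hf
                simpa [mul_comm] using hxy
          have h3 := radDiffGen_le _ h2 hPrad hPdiff h1
          rwa [mul_comm] at h3
        have h4 : ((a ^ m * ·) '' (↑P ∪ {y}) : Set A) ⊆ ↑P := by
          rintro _ ⟨e, he, rfl⟩
          exact himg e he
        have h5 := radDiffGen_le _ h4 hPrad hPdiff step1
        rw [← pow_add] at h5
        exact hPavoid (m + n) h5
    exact hPavoid 1 (by simpa using h ⟨⟨P, hprime⟩, hPdiff⟩)
  · rintro ⟨n, hn⟩ p
    exact p.1.2.mem_of_pow_mem n (hn ▸ p.1.asIdeal.zero_mem)
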